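/- Let n ≥ 1, k ≥ 1, and let h : E(K_{n,n}) → ℝ^k satisfy ‖h(e)‖₁ ≤ 1 for all edges e. Then there is an edge-weighting w : E(K_{n,n}) → [0,1] such that Σ_e w(e)·h(e) = (1/n)·h(K_{n,n}), and the subgraph of K_{n,n} consisting of all edges e with 0 < w(e) < 1 has cyclomatic number at most k. -/

import Mathlib

open Finset

lemma key_lemma {α : Type*} [DecidableEq α] (k : ℕ) (E : Finset α) (h : α → Fin k → ℝ) :
    ∀ (N : ℕ) (w : α → ℝ), (E.filter (fun e => 0 < w e ∧ w e < 1)).card ≤ N →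
      (∀ e ∈ E, 0 ≤ w e ∧ w e ≤ 1) →
      ∃ w' : α → ℝ, (∀ e ∈ E, 0 ≤ w' e ∧ w' e ≤ 1) ∧
        (∀ i : Fin k, ∑ e ∈ E, w' e * h e i = ∑ e ∈ E, w e * h e i) ∧
        (E.filter (fun e => 0 < w' e ∧ w' e < 1)).card ≤ k := by
  intro N
  induction N with
  | zero =>
    intro w hcard hw
    exact ⟨w, hw, fun i => rfl, le_trans hcard (Nat.zero_le k)⟩
  | succ N ih =>
    intro w hcard hw
    set F : Finset α := E.filter (fun e => 0 < w e ∧ w e < 1) with hF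
    by_cases hFk : F.card ≤ k
    · exact ⟨w, hw, fun i => rfl, hFk⟩
    push_neg at hFk
    -- linear map from (F → ℝ) to (Fin k → ℝ)
    let φ : (F → ℝ) →ₗ[ℝ] (Fin k → ℝ) :=
      { toFun := fun x i => ∑ e : F, x e * h e.1 i
        map_add' := by
          intro x y; funext i; simp [add_mul, Finset.sum_add_distrib]
        map_smul' := by
          intro c x; funext i; simp [Finset.mul_sum, mul_assoc] }
    have hni : ¬ Function.Injective φ := by
      intro hinj
      have := LinearMap.finrank_le_finrank_of_injective hinj
      rw [Module.finrank_fintype_fun_eq_card, Module.finrank_fintype_fun_eq_card] at this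
      simp [Fintype.card_coe] at this
      omega
    rw [Function.not_injective_iff] at hni
    obtain ⟨a, b, hab, hne⟩ := hni
    have hker : φ (a - b) = 0 := by rw [map_sub, hab, sub_self]
    have hxne : a - b ≠ 0 := sub_ne_zero.mpr hne
    -- extend to α
    let x : α → ℝ := fun e => if he : e ∈ F then (a - b) ⟨e, he⟩ else 0
    have hxF : ∀ e ∉ F, x e = 0 := fun e he => dif_neg he
    have hxsum : ∀ i : Fin k, ∑ e ∈ E, x e * h e i = 0 := by
      intro i
      have h1 : ∑ e ∈ E, x e * h e i = ∑ e ∈ F, x e * h e i := by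
        refine (Finset.sum_subset (Finset.filter_subset _ _) ?_).symm
        intro e heE heF
        rw [hxF e heF, zero_mul]
      rw [h1]
      have h2 : ∑ e ∈ F, x e * h e i = ∑ e : F, (a - b) e * h e.1 i := by
        rw [← Finset.sum_coe_sort]
        refine Finset.sum_congr rfl ?_
        intro e _
        simp only [x, dif_pos e.2]
      rw [h2]
      exact congrFun hker i
    -- the support
    have hSne : ∃ e ∈ F, x e ≠ 0 := by
      obtain ⟨e, he⟩ := Function.ne_iff.mp hxne
      exact ⟨e.1, e.2, by simpa [x, dif_pos e.2] using he⟩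
    set S : Finset α := F.filter (fun e => x e ≠ 0) with hS
    have hSne' : S.Nonempty := by
      obtain ⟨e, heF, hex⟩ := hSne
      exact ⟨e, Finset.mem_filter.mpr ⟨heF, hex⟩⟩
    -- step sizes
    let c : α → ℝ := fun e => if 0 < x e then (1 - w e) / x e else (- w e) / x e
    have hcpos : ∀ e ∈ S, 0 < c e := by
      intro e heS
      obtain ⟨heF, hex⟩ := Finset.mem_filter.mp heS
      obtain ⟨heE, hw0, hw1⟩ : e ∈ E ∧ 0 < w e ∧ w e < 1 := by
        have := Finset.mem_filter.mp heF
        exact ⟨this.1, this.2.1, this.2.2⟩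
      simp only [c]
      rcases lt_or_gt_of_ne hex with hneg | hpos
      · rw [if_neg (by linarith)]
        exact div_pos_of_neg_of_neg (by linarith) hneg
      · rw [if_pos hpos]
        exact div_pos (by linarith) hpos
    set t : ℝ := S.inf' hSne' c with ht
    have htpos : 0 < t := (Finset.lt_inf'_iff hSne').mpr hcpos
    have htle : ∀ e ∈ S, t ≤ c e := fun e he => Finset.inf'_le c he
    -- new weights
    set w₂ : α → ℝ := fun e => w e + t * x e with hw₂
    -- key bounds for e ∈ S
    have hbound : ∀ e ∈ S, 0 ≤ w₂ e ∧ w₂ e ≤ 1 := by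
      intro e heS
      obtain ⟨heF, hex⟩ := Finset.mem_filter.mp heS
      obtain ⟨heE, hw0, hw1⟩ : e ∈ E ∧ 0 < w e ∧ w e < 1 := by
        have := Finset.mem_filter.mp heF
        exact ⟨this.1, this.2.1, this.2.2⟩
      have hte := htle e heS
      simp only [w₂]
      rcases lt_or_gt_of_ne hex with hneg | hpos
      · simp only [c, if_neg (by linarith : ¬ 0 < x e)] at hte
        rw [le_div_iff_of_neg hneg] at hte
        constructor
        · linarith
        · nlinarith
      · simp only [c, if_pos hpos] at hte
        rw [le_div_iff₀ hpos] at hte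
        constructor
        · nlinarith
        · linarith
    have hw₂fix : ∀ e, e ∉ S → w₂ e = w e := by
      intro e heS
      by_cases heF : e ∈ F
      · have : x e = 0 := by
          by_contra hx
          exact heS (Finset.mem_filter.mpr ⟨heF, hx⟩)
        simp [w₂, this]
      · simp [w₂, hxF e heF]
    have hw₂bd : ∀ e ∈ E, 0 ≤ w₂ e ∧ w₂ e ≤ 1 := by
      intro e heE
      by_cases heS : e ∈ S
      · exact hbound e heS
      · rw [hw₂fix e heS]; exact hw e heE
    -- sums preserved
    have hw₂sum : ∀ i : Fin k, ∑ e ∈ E, w₂ e * h e i = ∑ e ∈ E, w e * h e i := by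
      intro i
      simp only [w₂, add_mul]
      rw [Finset.sum_add_distrib]
      have : ∑ e ∈ E, t * x e * h e i = t * ∑ e ∈ E, x e * h e i := by
        rw [Finset.mul_sum]; exact Finset.sum_congr rfl (fun e _ => by ring)
      rw [this, hxsum i, mul_zero, add_zero]
    -- the minimizer becomes integral
    obtain ⟨e₀, he₀S, he₀⟩ := Finset.exists_mem_eq_inf' hSne' c
    have he₀F : e₀ ∈ F := (Finset.mem_filter.mp he₀S).1
    have he₀x : x e₀ ≠ 0 := (Finset.mem_filter.mp he₀S).2
    have he₀int : w₂ e₀ = 0 ∨ w₂ e₀ = 1 := by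
      simp only [w₂]
      rcases lt_or_gt_of_ne he₀x with hneg | hpos
      · left
        rw [← ht] at he₀
        rw [he₀]
        simp only [c, if_neg (by linarith : ¬ 0 < x e₀)]
        field_simp
        ring
      · right
        rw [← ht] at he₀
        rw [he₀]
        simp only [c, if_pos hpos]
        field_simp
        ring
    -- new fractional set is smaller
    have hsub : E.filter (fun e => 0 < w₂ e ∧ w₂ e < 1) ⊆ F.erase e₀ := by
      intro e he
      obtain ⟨heE, hfrac⟩ := Finset.mem_filter.mp he
      have heF : e ∈ F := by
        by_contra heF
        have : w₂ e = w e := by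
          by_cases heS : e ∈ S
          · exact absurd (Finset.mem_filter.mp heS).1 heF
          · exact hw₂fix e heS
        rw [this] at hfrac
        exact heF (Finset.mem_filter.mpr ⟨heE, hfrac⟩)
      refine Finset.mem_erase.mpr ⟨?_, heF⟩
      intro heq
      subst heq
      rcases he₀int with h0 | h1
      · rw [h0] at hfrac; exact lt_irrefl 0 hfrac.1
      · rw [h1] at hfrac; exact lt_irrefl 1 hfrac.2
    have hcard₂ : (E.filter (fun e => 0 < w₂ e ∧ w₂ e < 1)).card ≤ N := by
      have h1 := Finset.card_le_card hsub
      have h2 : (F.erase e₀).card = F.card - 1 := Finset.card_erase_of_mem he₀F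
      omega
    obtain ⟨w', hw'bd, hw'sum, hw'card⟩ := ih w₂ hcard₂ hw₂bd
    exact ⟨w', hw'bd, fun i => (hw'sum i).trans (hw₂sum i), hw'card⟩



/-- the linear relaxation lemma for `K_{n,n}`: there is an edge-weighting
`w : E(K_{n,n}) → [0,1]` with `∑_e w(e)h(e) = (1/n)·h(K_{n,n})` whose fractional part
(the subgraph of edges with `0 < w(e) < 1`) has cyclomatic number at most `k`. -/
theorem stmt_8 (n k : ℕ) (hn : 1 ≤ n) (hk : 1 ≤ k)
    (h : Sym2 (Fin n ⊕ Fin n) → Fin k → ℝ)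
    (hh : ∀ e ∈ (completeBipartiteGraph (Fin n) (Fin n)).edgeSet, ∑ i : Fin k, |h e i| ≤ 1) :
    ∃ w : Sym2 (Fin n ⊕ Fin n) → ℝ,
      (∀ e ∈ (completeBipartiteGraph (Fin n) (Fin n)).edgeSet, 0 ≤ w e ∧ w e ≤ 1) ∧
      (∀ i : Fin k,
        ∑ e ∈ (completeBipartiteGraph (Fin n) (Fin n)).edgeSet.toFinite.toFinset, w e * h e i =
          (1 / (n : ℝ)) *
            ∑ e ∈ (completeBipartiteGraph (Fin n) (Fin n)).edgeSet.toFinite.toFinset, h e i) ∧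
      (SimpleGraph.fromEdgeSet
            {e ∈ (completeBipartiteGraph (Fin n) (Fin n)).edgeSet |
              0 < w e ∧ w e < 1}).edgeSet.ncard +
          Nat.card (SimpleGraph.fromEdgeSet
            {e ∈ (completeBipartiteGraph (Fin n) (Fin n)).edgeSet |
              0 < w e ∧ w e < 1}).ConnectedComponent
        ≤ k + 2 * n := by
  classical
  set G := completeBipartiteGraph (Fin n) (Fin n) with hG
  set E : Finset (Sym2 (Fin n ⊕ Fin n)) := G.edgeSet.toFinite.toFinset with hE
  have hmemE : ∀ e, e ∈ E ↔ e ∈ G.edgeSet := fun e => Set.Finite.mem_toFinset _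
  have hnpos : (0 : ℝ) < n := by exact_mod_cast hn
  set w₀ : Sym2 (Fin n ⊕ Fin n) → ℝ := fun _ => (n : ℝ)⁻¹ with hw₀
  have hw₀bd : ∀ e ∈ E, 0 ≤ w₀ e ∧ w₀ e ≤ 1 := by
    intro e _
    constructor
    · positivity
    · rw [hw₀]
      simp only
      rw [inv_le_one_iff₀]
      right
      exact_mod_cast hn
  obtain ⟨w, hwbd, hwsum, hwcard⟩ := key_lemma k E h E.card w₀
    (Finset.card_le_card (Finset.filter_subset _ _)) hw₀bd
  refine ⟨w, fun e he => hwbd e ((hmemE e).mpr he), ?_, ?_⟩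
  · intro i
    rw [hwsum i]
    rw [one_div, ← Finset.mul_sum]
  · -- cyclomatic bound
    have hedge : (SimpleGraph.fromEdgeSet
        {e ∈ G.edgeSet | 0 < w e ∧ w e < 1}).edgeSet.ncard ≤ k := by
      rw [SimpleGraph.edgeSet_fromEdgeSet]
      have hsub : {e ∈ G.edgeSet | 0 < w e ∧ w e < 1} \ {e | e.IsDiag} =
          ↑(E.filter (fun e => 0 < w e ∧ w e < 1)) := by
        ext e
        simp only [Set.mem_diff, Set.mem_setOf_eq, Finset.coe_filter, Set.mem_sep_iff, hmemE]
        constructor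
        · rintro ⟨⟨h1, h2⟩, _⟩; exact ⟨h1, h2⟩
        · rintro ⟨h1, h2⟩; exact ⟨⟨h1, h2⟩, G.not_isDiag_of_mem_edgeSet h1⟩
      rw [show (Sym2.diagSet : Set (Sym2 (Fin n ⊕ Fin n))) = {e | e.IsDiag} from rfl, hsub, Set.ncard_coe_finset]
      exact hwcard
    have hcomp : Nat.card (SimpleGraph.fromEdgeSet
        {e ∈ G.edgeSet | 0 < w e ∧ w e < 1}).ConnectedComponent ≤ 2 * n := by
      have h1 := Nat.card_le_card_of_surjective
        (SimpleGraph.fromEdgeSet {e ∈ G.edgeSet | 0 < w e ∧ w e < 1}).connectedComponentMk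
        (fun c => c.exists_rep)
      have h2 : Nat.card (Fin n ⊕ Fin n) = 2 * n := by
        simp [Nat.card_eq_fintype_card, two_mul]
      omega
    omega
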